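/- Let β : B → ℝ be defined on the bonds of the triangular lattice with β ∈ ℓ²(B), and suppose that for each integer radius ρ with K ≤ ρ ≤ L/2, the sum of β over the bonds crossing (or lying on) a lattice circuit γ_ρ of radius ρ around the origin satisfies |Σ_{b∈γ_ρ} β_b| ≥ 1, while the number of bonds in γ_ρ is at most Cρ. Then ‖β‖_{ℓ²}² ≥ c log(L/(2K)) for constants c, C depending only on the lattice. -/

import Mathlib

noncomputable section
open Real

abbrev E2 := EuclideanSpace ℝ (Fin 2)

def la1 : E2 := WithLp.toLp 2 (![1, 0] : Fin 2 → ℝ)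
def la2 : E2 := WithLp.toLp 2 (![1/2, Real.sqrt 3 / 2] : Fin 2 → ℝ)

def TriLat : Set E2 :=
  {x | ∃ m n : ℤ, x = (3 : ℝ)⁻¹ • (la1 + la2) + m • la1 + n • la2}

def Bonds : Set (E2 × E2) :=
  {p | p.1 ∈ TriLat ∧ p.2 ∈ TriLat ∧ ‖p.2 - p.1‖ = 1}

lemma harmonic_bound (K : ℕ) (hK : 1 ≤ K) : ∀ M : ℕ,
    Real.log (M + 1) - Real.log K ≤ ∑ ρ ∈ Finset.Icc K M, (ρ : ℝ)⁻¹ := by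
  intro M
  induction M with
  | zero =>
    rw [Finset.Icc_eq_empty (by omega)]
    simp only [Finset.sum_empty, Nat.cast_zero, zero_add, Real.log_one]
    have : (0:ℝ) ≤ Real.log K := Real.log_nonneg (by exact_mod_cast hK)
    linarith
  | succ M ih =>
    by_cases h : K ≤ M + 1
    · rw [Finset.sum_Icc_succ_top h]
      have hstep : Real.log (M + 1 + 1) - Real.log (M + 1) ≤ ((M + 1 : ℕ) : ℝ)⁻¹ := by
        have hpos : (0:ℝ) < (M:ℝ) + 1 := by positivity
        have hx : (0:ℝ) < ((M:ℝ) + 2) / ((M:ℝ) + 1) := by positivity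
        have := Real.log_le_sub_one_of_pos hx
        rw [Real.log_div (by positivity) (by positivity)] at this
        have : Real.log ((M:ℝ) + 2) - Real.log ((M:ℝ) + 1) ≤ ((M:ℝ)+2)/((M:ℝ)+1) - 1 := this
        have heq : ((M:ℝ)+2)/((M:ℝ)+1) - 1 = ((M:ℝ)+1)⁻¹ := by field_simp; norm_num
        rw [heq] at this
        push_cast
        have h2 : (M:ℝ) + 1 + 1 = (M:ℝ) + 2 := by ring
        rw [h2]
        exact this
      have : (((M:ℕ):ℝ) + 1 + 1) = ((M+1:ℕ):ℝ) + 1 := by push_cast; ring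
      push_cast at ih hstep ⊢
      linarith
    · rw [Finset.Icc_eq_empty (by omega)]
      simp only [Finset.sum_empty]
      have : Real.log ((M:ℝ) + 1 + 1) ≤ Real.log K := by
        apply Real.log_le_log (by positivity)
        have : M + 2 ≤ K := by omega
        exact_mod_cast this
      push_cast
      linarith

/-- Logarithmic lower bound forced by a unit circulation: if β has circulation ≥ 1 on
disjoint lattice circuits γ_ρ of radius ρ, K ≤ ρ ≤ L/2, each using at most Cρ bonds,
then ‖β‖²_{ℓ²} ≥ c log(L/(2K)). -/
theorem stmt14 (C : ℝ) (hC : 0 < C) :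
    ∃ c : ℝ, 0 < c ∧
      ∀ (β : E2 × E2 → ℝ) (K L : ℕ) (γ : ℕ → Finset (E2 × E2)),
      1 ≤ K → 2 * K ≤ L →
      (∀ ρ σ : ℕ, ρ ≠ σ → Disjoint (γ ρ) (γ σ)) →
      (∀ ρ : ℕ, (γ ρ : Set (E2 × E2)) ⊆ Bonds) →
      (∀ ρ : ℕ, K ≤ ρ → ρ ≤ L / 2 → 1 ≤ |∑ b ∈ γ ρ, β b|) →
      (∀ ρ : ℕ, K ≤ ρ → ρ ≤ L / 2 → ((γ ρ).card : ℝ) ≤ C * ρ) →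
      Summable (fun b : Bonds => (β (b : E2 × E2)) ^ 2) →
      c * Real.log ((L : ℝ) / (2 * K)) ≤ ∑' b : Bonds, (β (b : E2 × E2)) ^ 2 := by
  refine ⟨C⁻¹, inv_pos.mpr hC, ?_⟩
  intro β K L γ hK hL hdisj hsub hcirc hcard hsum
  classical
  set M := L / 2 with hM
  have hKM : K ≤ M := by omega
  -- per-circuit lower bound
  have hρbound : ∀ ρ ∈ Finset.Icc K M, (C * ρ)⁻¹ ≤ ∑ b ∈ γ ρ, β b ^ 2 := by
    intro ρ hρ
    rw [Finset.mem_Icc] at hρ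
    have h1 := hcirc ρ hρ.1 hρ.2
    have h2 := hcard ρ hρ.1 hρ.2
    have hρpos : (0:ℝ) < ρ := by exact_mod_cast (by omega : 0 < ρ)
    have hCρ : (0:ℝ) < C * ρ := by positivity
    have hcs : (∑ b ∈ γ ρ, β b) ^ 2 ≤ ((γ ρ).card : ℝ) * ∑ b ∈ γ ρ, β b ^ 2 :=
      sq_sum_le_card_mul_sum_sq
    have h1' : (1:ℝ) ≤ (∑ b ∈ γ ρ, β b) ^ 2 := by
      have := sq_abs (∑ b ∈ γ ρ, β b)
      nlinarith [abs_nonneg (∑ b ∈ γ ρ, β b)]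
    have hsq : ∑ b ∈ γ ρ, β b ^ 2 ≥ 0 := Finset.sum_nonneg fun _ _ => sq_nonneg _
    rw [inv_le_iff_one_le_mul₀ hCρ]
    nlinarith
  -- sum over the union
  set T : Finset (E2 × E2) := (Finset.Icc K M).biUnion γ with hT
  have hTsum : ∑ b ∈ T, β b ^ 2 = ∑ ρ ∈ Finset.Icc K M, ∑ b ∈ γ ρ, β b ^ 2 :=
    Finset.sum_biUnion (fun ρ _ σ _ hne => hdisj ρ σ hne)
  have hTsub : ∀ b ∈ T, b ∈ Bonds := by
    intro b hb
    rw [hT, Finset.mem_biUnion] at hb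
    obtain ⟨ρ, _, hbρ⟩ := hb
    exact hsub ρ hbρ
  -- tsum bound
  have htsum : ∑ b ∈ T, β b ^ 2 ≤ ∑' b : Bonds, (β (b : E2 × E2)) ^ 2 := by
    rw [tsum_subtype Bonds fun x => β x ^ 2]
    have hsum' : Summable (Bonds.indicator fun x => β x ^ 2) := by
      rwa [← summable_subtype_iff_indicator]
    have := Summable.sum_le_tsum T (fun b _ => Set.indicator_nonneg (fun x _ => sq_nonneg _) b) hsum'
    refine le_trans (le_of_eq ?_) this
    apply Finset.sum_congr rfl
    intro b hb
    rw [Set.indicator_of_mem (hTsub b hb)]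
  -- harmonic sum
  have hharm : ∑ ρ ∈ Finset.Icc K M, (C * ρ)⁻¹ = C⁻¹ * ∑ ρ ∈ Finset.Icc K M, (ρ:ℝ)⁻¹ := by
    rw [Finset.mul_sum]
    exact Finset.sum_congr rfl fun ρ _ => by rw [mul_inv]
  have hKpos : (0:ℝ) < K := by exact_mod_cast hK
  have hlog : Real.log ((L:ℝ) / (2 * K)) ≤ ∑ ρ ∈ Finset.Icc K M, (ρ:ℝ)⁻¹ := by
    have h1 := harmonic_bound K hK M
    have hLle : (L:ℝ) ≤ 2 * ((M:ℝ) + 1) := by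
      have h2 : L ≤ 2 * M + 1 := by omega
      have h3 : (L:ℝ) ≤ 2 * (M:ℝ) + 1 := by exact_mod_cast h2
      linarith
    have hLpos : (0:ℝ) < L := by exact_mod_cast (by omega : 0 < L)
    have hdivle : (L:ℝ) / (2 * K) ≤ ((M:ℝ) + 1) / K := by
      rw [div_le_div_iff₀ (by positivity) hKpos]; nlinarith
    calc Real.log ((L:ℝ) / (2 * K)) ≤ Real.log (((M:ℝ) + 1) / K) :=
          Real.log_le_log (by positivity) hdivle
      _ = Real.log ((M:ℝ) + 1) - Real.log K := Real.log_div (by positivity) (ne_of_gt hKpos)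
      _ ≤ _ := h1
  have hmid : ∑ ρ ∈ Finset.Icc K M, (C * ρ)⁻¹ ≤ ∑ b ∈ T, β b ^ 2 := by
    rw [hTsum]; exact Finset.sum_le_sum hρbound
  have : C⁻¹ * Real.log ((L:ℝ) / (2 * K)) ≤ C⁻¹ * ∑ ρ ∈ Finset.Icc K M, (ρ:ℝ)⁻¹ :=
    mul_le_mul_of_nonneg_left hlog (inv_pos.mpr hC).le
  rw [← hharm] at this
  linarith
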